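/- Let n ≥ 1 be an integer, 1 ≤ p < ∞ and 0 < β < n. There exists a function f ∈ L^{p,β}(ℝⁿ) that belongs to both the vanishing-at-origin subspace L^{p,β}_0(ℝⁿ) and the vanishing-at-infinity subspace L^{p,β}_∞(ℝⁿ) but does not belong to the truncation subspace L^{p,β}_*(ℝⁿ). -/

import Mathlib

open MeasureTheory Metric ENNReal Filter

noncomputable def morreyA (n : ℕ) (p β : ℝ)
    (f : EuclideanSpace ℝ (Fin n) → ℂ)
    (y : EuclideanSpace ℝ (Fin n)) (r : ℝ) : ℝ≥0∞ :=
  ENNReal.ofReal (r ^ (-β)) * ∫⁻ x in ball y r, (‖f x‖₊ : ℝ≥0∞) ^ p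

/-- The (global) Morrey norm `‖f‖_{L^{p,β}}`. -/
noncomputable def morreyNorm (n : ℕ) (p β : ℝ)
    (f : EuclideanSpace ℝ (Fin n) → ℂ) : ℝ≥0∞ :=
  ⨆ (y : EuclideanSpace ℝ (Fin n)) (r : ℝ) (_ : 0 < r),
    (morreyA n p β f y r) ^ (1 / p)

/-- Membership in the vanishing-at-origin subspace `L^{p,β}_0`. -/
def vanishAtOrigin (n : ℕ) (p β : ℝ) (f : EuclideanSpace ℝ (Fin n) → ℂ) : Prop :=
  Tendsto
    (fun t : ℝ => ⨆ (y : EuclideanSpace ℝ (Fin n)) (r : ℝ) (_ : 0 < r) (_ : r ≤ t),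
      morreyA n p β f y r)
    (nhdsWithin 0 (Set.Ioi 0)) (nhds 0)

/-- Membership in the vanishing-at-infinity subspace `L^{p,β}_∞`. -/
def vanishAtInfinity (n : ℕ) (p β : ℝ) (f : EuclideanSpace ℝ (Fin n) → ℂ) : Prop :=
  Tendsto
    (fun t : ℝ => ⨆ (y : EuclideanSpace ℝ (Fin n)) (r : ℝ) (_ : t ≤ r),
      morreyA n p β f y r)
    atTop (nhds 0)

/-- Membership in the truncation subspace `L^{p,β}_*`. -/
def vanishTrunc (n : ℕ) (p β : ℝ) (f : EuclideanSpace ℝ (Fin n) → ℂ) : Prop :=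
  Tendsto
    (fun N : ℝ => ⨆ (y : EuclideanSpace ℝ (Fin n)) (r : ℝ) (_ : 0 < r),
      ENNReal.ofReal (r ^ (-β)) *
        ∫⁻ x in ball y r ∩ {x : EuclideanSpace ℝ (Fin n) | N < ‖x‖},
          (‖f x‖₊ : ℝ≥0∞) ^ p)
    atTop (nhds 0)


lemma count_bound (n : ℕ) (hn : 1 ≤ n) (c : ℕ → EuclideanSpace ℝ (Fin n))
    (hd : ∀ m k : ℕ, m ≤ k → dist (c k) (c m) = 4 ^ (k+1) - 4 ^ (m+1))
    (y : EuclideanSpace ℝ (Fin n)) (r : ℝ) (hr : 0 < r) :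
    volume (ball y r ∩ ⋃ k, ball (c k) 1) ≤
      ENNReal.ofReal (Real.logb 4 (2*r+2) + 1) *
        volume (ball (0 : EuclideanSpace ℝ (Fin n)) 1) := by
  classical
  haveI : Nonempty (Fin n) := ⟨⟨0, hn⟩⟩
  set V := volume (ball (0 : EuclideanSpace ℝ (Fin n)) 1) with hVdef
  have hball1 : ∀ k, volume (ball (c k) 1) = V := by
    intro k
    rw [Measure.addHaar_ball volume _ (by norm_num : (0:ℝ) ≤ 1)]
    simp [hVdef]
  have hsub : volume (ball y r ∩ ⋃ k, ball (c k) 1) ≤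
      ∑' k, volume (ball y r ∩ ball (c k) 1) := by
    rw [Set.inter_iUnion]; exact measure_iUnion_le _
  have hlogb : 0 ≤ Real.logb 4 (2*r+2) :=
    Real.logb_nonneg (by norm_num) (by linarith)
  by_cases hP : ∃ k, (ball y r ∩ ball (c k) 1).Nonempty
  · set m := Nat.find hP with hmdef
    have hm : (ball y r ∩ ball (c m) 1).Nonempty := Nat.find_spec hP
    set K := ⌊Real.logb 4 (2*r+2)⌋₊ with hKdef
    have hK : ∀ k, (ball y r ∩ ball (c k) 1).Nonempty → k ≤ m + K := by
      intro k hk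
      have hmk : m ≤ k := Nat.find_min' hP hk
      obtain ⟨z, hz1, hz2⟩ := hk
      obtain ⟨w, hw1, hw2⟩ := hm
      have hdist : dist (c k) (c m) < 2*r + 2 := by
        have h1 := dist_triangle4 (c k) z w (c m)
        have h2 : dist z w ≤ dist z y + dist y w := dist_triangle z y w
        have hz2' : dist (c k) z < 1 := by rw [dist_comm]; exact mem_ball.mp hz2
        have hw2' : dist w (c m) < 1 := mem_ball.mp hw2
        have hz1' : dist z y < r := mem_ball.mp hz1
        have hw1' : dist y w < r := by rw [dist_comm]; exact mem_ball.mp hw1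
        linarith
      have hpow : (4:ℝ) ^ (k - m) < 2*r + 2 := by
        rcases eq_or_lt_of_le hmk with he | hlt
        · subst he; simp; linarith
        · have hj : 1 ≤ k - m := by omega
          have hsplit : (4:ℝ) ^ (k+1) = 4 ^ (m+1) * 4 ^ (k - m) := by
            rw [← pow_add]; congr 1; omega
          have h4j : (4:ℝ) ≤ 4 ^ (k - m) := by
            calc (4:ℝ) = 4 ^ 1 := (pow_one 4).symm
            _ ≤ 4 ^ (k - m) := pow_le_pow_right₀ (by norm_num) hj
          have h4m : (4:ℝ) ≤ 4 ^ (m+1) := by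
            calc (4:ℝ) = 4 ^ 1 := (pow_one 4).symm
            _ ≤ 4 ^ (m+1) := pow_le_pow_right₀ (by norm_num) (by omega)
          have := hd m k hmk
          nlinarith [hdist]
      have : ((k - m : ℕ) : ℝ) < Real.logb 4 (2*r+2) := by
        rw [Real.lt_logb_iff_rpow_lt (by norm_num) (by linarith), Real.rpow_natCast]
        exact hpow
      have : k - m ≤ K := Nat.le_floor this.le
      omega
    have hzero : ∀ k ∉ Finset.Icc m (m+K), volume (ball y r ∩ ball (c k) 1) = 0 := by
      intro k hk
      rw [Finset.mem_Icc] at hk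
      by_cases hne : (ball y r ∩ ball (c k) 1).Nonempty
      · exact absurd ⟨Nat.find_min' hP hne, hK k hne⟩ hk
      · rw [Set.not_nonempty_iff_eq_empty.mp hne, measure_empty]
    calc volume (ball y r ∩ ⋃ k, ball (c k) 1)
        ≤ ∑' k, volume (ball y r ∩ ball (c k) 1) := hsub
      _ = ∑ k ∈ Finset.Icc m (m+K), volume (ball y r ∩ ball (c k) 1) := tsum_eq_sum hzero
      _ ≤ ∑ k ∈ Finset.Icc m (m+K), V :=
          Finset.sum_le_sum fun k _ =>
            (measure_mono Set.inter_subset_right).trans (hball1 k).le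
      _ = (K + 1 : ℕ) • V := by rw [Finset.sum_const, Nat.card_Icc]; congr 1; omega
      _ = ((K : ℝ≥0∞) + 1) * V := by rw [nsmul_eq_mul]; push_cast; ring_nf
      _ ≤ ENNReal.ofReal (Real.logb 4 (2*r+2) + 1) * V := by
          gcongr
          rw [← ENNReal.ofReal_natCast K, ← ENNReal.ofReal_one, ← ENNReal.ofReal_add
            (by positivity) zero_le_one]
          exact ENNReal.ofReal_le_ofReal (by
            have := Nat.floor_le hlogb
            linarith)
  · push_neg at hP
    have : ∀ k, volume (ball y r ∩ ball (c k) 1) = 0 := fun k => by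
      rw [hP k, measure_empty]
    calc volume (ball y r ∩ ⋃ k, ball (c k) 1)
        ≤ ∑' k, volume (ball y r ∩ ball (c k) 1) := hsub
      _ = 0 := by simp [this]
      _ ≤ _ := zero_le


lemma centers_exist (n : ℕ) (hn : 1 ≤ n) :
    ∃ c : ℕ → EuclideanSpace ℝ (Fin n),
      (∀ k, ‖c k‖ = 4 ^ (k+1)) ∧
      (∀ m k : ℕ, m ≤ k → dist (c k) (c m) = 4 ^ (k+1) - 4 ^ (m+1)) := by
  set e : EuclideanSpace ℝ (Fin n) := EuclideanSpace.single ⟨0, hn⟩ 1 with he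
  have hne : ‖e‖ = 1 := by rw [he, EuclideanSpace.norm_single]; simp
  refine ⟨fun k => ((4:ℝ) ^ (k+1)) • e, fun k => ?_, fun m k hmk => ?_⟩
  · rw [norm_smul, hne, mul_one, Real.norm_eq_abs, abs_of_pos (by positivity)]
  · rw [dist_eq_norm, ← sub_smul, norm_smul, hne, mul_one, Real.norm_eq_abs,
      abs_of_nonneg (by simp; exact pow_le_pow_right₀ (by norm_num) (by omega))]

lemma log_bound (β : ℝ) (hβ : 0 < β) :
    ∃ C : ℝ, 0 < C ∧ ∀ r : ℝ, 1 ≤ r →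
      Real.logb 4 (2*r+2) + 1 ≤ C * r ^ (β/2) := by
  refine ⟨(4:ℝ) ^ (β/2) * (2 / (β * Real.log 4)) + 1, by positivity, fun r hr => ?_⟩
  have hlog4 : 0 < Real.log 4 := Real.log_pos (by norm_num)
  have h1 : Real.logb 4 (2*r+2) ≤ Real.logb 4 (4*r) :=
    Real.logb_le_logb_of_le (by norm_num) (by linarith) (by linarith)
  have h2 : Real.log (4*r) ≤ (4*r) ^ (β/2) / (β/2) :=
    Real.log_le_rpow_div (by linarith) (by linarith)
  have h3 : ((4:ℝ)*r) ^ (β/2) = 4 ^ (β/2) * r ^ (β/2) :=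
    Real.mul_rpow (by norm_num) (by linarith)
  have h4 : (1:ℝ) ≤ r ^ (β/2) := Real.one_le_rpow hr (by linarith)
  have h6 : Real.logb 4 (4*r) ≤ (4:ℝ) ^ (β/2) * (2/(β * Real.log 4)) * r ^ (β/2) := by
    rw [Real.logb, div_le_iff₀ hlog4]
    calc Real.log (4*r) ≤ (4*r) ^ (β/2) / (β/2) := h2
      _ = 4 ^ (β/2) * (2/(β * Real.log 4)) * r ^ (β/2) * Real.log 4 := by
          rw [h3]; field_simp
  nlinarith

/-- There is a function in `L^{p,β}_0(ℝⁿ) ∩ L^{p,β}_∞(ℝⁿ)` that does not belong to the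
truncation subspace `L^{p,β}_*(ℝⁿ)`. -/

theorem exists_vanishing_not_trunc (n : ℕ) (hn : 1 ≤ n) (p β : ℝ)
    (hp : 1 ≤ p) (hβ : 0 < β) (hβn : β < n) :
    ∃ f : EuclideanSpace ℝ (Fin n) → ℂ, Measurable f ∧
      morreyNorm n p β f < ⊤ ∧
      vanishAtOrigin n p β f ∧ vanishAtInfinity n p β f ∧
      ¬ vanishTrunc n p β f := by

  classical
  haveI : Nonempty (Fin n) := ⟨⟨0, hn⟩⟩
  obtain ⟨c, hcnorm, hcdist⟩ := centers_exist n hn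
  obtain ⟨C, hC, hlogC⟩ := log_bound β hβ
  set S : Set (EuclideanSpace ℝ (Fin n)) := ⋃ k, ball (c k) 1 with hSdef
  have hSmeas : MeasurableSet S := (isOpen_iUnion fun k => isOpen_ball).measurableSet
  set f : EuclideanSpace ℝ (Fin n) → ℂ := S.indicator (fun _ => 1) with hfdef
  have hp0 : (0:ℝ) < p := lt_of_lt_of_le one_pos hp
  have hnβ : (0:ℝ) < (n:ℝ) - β := by
    have : (β:ℝ) < (n:ℝ) := hβn
    linarith
  set V := volume (ball (0 : EuclideanSpace ℝ (Fin n)) 1) with hVdef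
  have hV0 : V ≠ 0 := (measure_ball_pos volume 0 one_pos).ne'
  have hVtop : V ≠ ⊤ := measure_ball_lt_top.ne
  have hballvol : ∀ (x : EuclideanSpace ℝ (Fin n)) (r : ℝ), 0 ≤ r →
      volume (ball x r) = ENNReal.ofReal (r ^ n) * V := by
    intro x r hr
    rw [Measure.addHaar_ball volume x hr, hVdef]
    simp
  have hInt : ∀ A : Set (EuclideanSpace ℝ (Fin n)),
      ∫⁻ x in A, (‖f x‖₊ : ℝ≥0∞) ^ p = volume (A ∩ S) := by
    intro A
    have hpt : ∀ x, (‖f x‖₊ : ℝ≥0∞) ^ p = S.indicator (fun _ => 1) x := by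
      intro x
      by_cases h : x ∈ S <;>
        simp [hfdef, h, Set.indicator_of_mem, Set.indicator_of_notMem,
          ENNReal.zero_rpow_of_pos hp0]
    simp_rw [hpt]
    rw [setLIntegral_indicator hSmeas]
    simp [Set.inter_comm]
  have hAeq : ∀ (y : EuclideanSpace ℝ (Fin n)) (r : ℝ),
      morreyA n p β f y r = ENNReal.ofReal (r ^ (-β)) * volume (ball y r ∩ S) := by
    intro y r
    rw [morreyA, hInt]
  -- bound 1 : small radii
  have hbound1 : ∀ (y : EuclideanSpace ℝ (Fin n)) (r : ℝ), 0 < r →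
      morreyA n p β f y r ≤ ENNReal.ofReal (r ^ ((n:ℝ) - β)) * V := by
    intro y r hr
    rw [hAeq]
    calc ENNReal.ofReal (r ^ (-β)) * volume (ball y r ∩ S)
        ≤ ENNReal.ofReal (r ^ (-β)) * (ENNReal.ofReal (r ^ n) * V) := by
          gcongr
          rw [← hballvol y r hr.le]
          exact measure_mono Set.inter_subset_left
      _ = ENNReal.ofReal (r ^ (-β) * r ^ n) * V := by
          rw [ENNReal.ofReal_mul (by positivity), mul_assoc]
      _ = ENNReal.ofReal (r ^ ((n:ℝ) - β)) * V := by
          congr 1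
          rw [show ((n:ℝ) - β) = -β + n by ring, Real.rpow_add hr, Real.rpow_natCast]
  -- bound 2 : large radii via counting
  have hbound2 : ∀ (y : EuclideanSpace ℝ (Fin n)) (r : ℝ), 1 ≤ r →
      morreyA n p β f y r ≤ ENNReal.ofReal (C * r ^ (-(β/2))) * V := by
    intro y r hr1
    have hr : (0:ℝ) < r := lt_of_lt_of_le one_pos hr1
    rw [hAeq]
    calc ENNReal.ofReal (r ^ (-β)) * volume (ball y r ∩ S)
        ≤ ENNReal.ofReal (r ^ (-β)) *
            (ENNReal.ofReal (Real.logb 4 (2*r+2) + 1) * V) := by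
          gcongr
          exact count_bound n hn c hcdist y r hr
      _ = ENNReal.ofReal (r ^ (-β) * (Real.logb 4 (2*r+2) + 1)) * V := by
          rw [ENNReal.ofReal_mul (by positivity), mul_assoc]
      _ ≤ ENNReal.ofReal (C * r ^ (-(β/2))) * V := by
          refine mul_le_mul_left (ENNReal.ofReal_le_ofReal ?_) V
          have h1 : Real.logb 4 (2*r+2) + 1 ≤ C * r ^ (β/2) := hlogC r hr1
          have h2 : r ^ (-β) * (C * r ^ (β/2)) = C * r ^ (-(β/2)) := by
            rw [show -(β/2) = -β + β/2 by ring, Real.rpow_add hr]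
            ring
          calc r ^ (-β) * (Real.logb 4 (2*r+2) + 1)
              ≤ r ^ (-β) * (C * r ^ (β/2)) := by
                apply mul_le_mul_of_nonneg_left h1 (by positivity)
            _ = C * r ^ (-(β/2)) := h2
  refine ⟨f, ?_, ?_, ?_, ?_, ?_⟩
  · -- measurable
    exact measurable_const.indicator hSmeas
  · -- finite Morrey norm
    set M : ℝ≥0∞ := ENNReal.ofReal (max 1 C) * V with hMdef
    have hM : ∀ (y : EuclideanSpace ℝ (Fin n)) (r : ℝ), 0 < r →
        morreyA n p β f y r ≤ M := by
      intro y r hr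
      rcases le_or_gt r 1 with h1 | h1
      · refine (hbound1 y r hr).trans
          (mul_le_mul_left (ENNReal.ofReal_le_ofReal
            ((Real.rpow_le_one hr.le h1 hnβ.le).trans (le_max_left 1 C))) V)
      · refine (hbound2 y r h1.le).trans
          (mul_le_mul_left (ENNReal.ofReal_le_ofReal ?_) V)
        have : r ^ (-(β/2)) ≤ 1 :=
          Real.rpow_le_one_of_one_le_of_nonpos h1.le (by linarith)
        calc C * r ^ (-(β/2)) ≤ C * 1 := by
              apply mul_le_mul_of_nonneg_left this hC.le
          _ = C := mul_one C
          _ ≤ max 1 C := le_max_right 1 C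
    have hMtop : M ≠ ⊤ := ENNReal.mul_ne_top ENNReal.ofReal_ne_top hVtop
    have : morreyNorm n p β f ≤ M ^ (1/p) := by
      rw [morreyNorm]
      refine iSup_le fun y => iSup_le fun r => iSup_le fun hr => ?_
      exact ENNReal.rpow_le_rpow (hM y r hr) (by positivity)
    exact lt_of_le_of_lt this (ENNReal.rpow_lt_top_of_nonneg (by positivity) hMtop)
  · -- vanishing at origin
    rw [vanishAtOrigin]
    have hupper :
        Tendsto (fun t : ℝ => ENNReal.ofReal (t ^ ((n:ℝ) - β)) * V)
          (nhdsWithin 0 (Set.Ioi 0)) (nhds 0) := by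
      have hcont : ContinuousAt (fun t : ℝ => t ^ ((n:ℝ) - β)) 0 :=
        Real.continuousAt_rpow_const 0 _ (Or.inr hnβ.le)
      have h0 : Tendsto (fun t : ℝ => t ^ ((n:ℝ) - β))
          (nhdsWithin 0 (Set.Ioi 0)) (nhds 0) := by
        have := hcont.tendsto
        rw [Real.zero_rpow hnβ.ne'] at this
        exact tendsto_nhdsWithin_of_tendsto_nhds this
      have := ENNReal.Tendsto.mul_const (ENNReal.tendsto_ofReal h0) (Or.inr hVtop)
      simpa using this
    refine tendsto_of_tendsto_of_tendsto_of_le_of_le' tendsto_const_nhds hupper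
      (Eventually.of_forall fun t => zero_le) ?_
    filter_upwards [Ioc_mem_nhdsGT_of_mem (Set.mem_Ico.mpr ⟨le_refl (0:ℝ), one_pos⟩)]
      with t ht
    obtain ⟨ht0, ht1⟩ := ht
    refine iSup_le fun y => iSup_le fun r => iSup_le fun hr => iSup_le fun hrt => ?_
    exact (hbound1 y r hr).trans (mul_le_mul_left (ENNReal.ofReal_le_ofReal
      (Real.rpow_le_rpow hr.le hrt hnβ.le)) V)
  · -- vanishing at infinity
    rw [vanishAtInfinity]
    have hupper :
        Tendsto (fun t : ℝ => ENNReal.ofReal (C * t ^ (-(β/2))) * V)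
          atTop (nhds 0) := by
      have h0 : Tendsto (fun t : ℝ => C * t ^ (-(β/2))) atTop (nhds 0) := by
        have := (tendsto_rpow_neg_atTop (by linarith : (0:ℝ) < β/2)).const_mul C
        simpa using this
      have := ENNReal.Tendsto.mul_const (ENNReal.tendsto_ofReal h0) (Or.inr hVtop)
      simpa using this
    refine tendsto_of_tendsto_of_tendsto_of_le_of_le' tendsto_const_nhds hupper
      (Eventually.of_forall fun t => zero_le) ?_
    filter_upwards [eventually_ge_atTop (1:ℝ)] with t ht1
    refine iSup_le fun y => iSup_le fun r => iSup_le fun htr => ?_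
    have hr1 : (1:ℝ) ≤ r := le_trans ht1 htr
    refine (hbound2 y r hr1).trans
      (mul_le_mul_left (ENNReal.ofReal_le_ofReal ?_) V)
    have h2 : r ^ (-(β/2)) ≤ t ^ (-(β/2)) :=
      Real.rpow_le_rpow_of_nonpos (lt_of_lt_of_le one_pos ht1) htr (by linarith)
    nlinarith
  · -- not in the truncation subspace
    intro hvt
    rw [vanishTrunc, ENNReal.tendsto_nhds_zero] at hvt
    obtain ⟨N, hN⟩ := (hvt (V/2) (ENNReal.half_pos hV0)).exists
    obtain ⟨j, hj⟩ := pow_unbounded_of_one_lt (R := ℝ) N (by norm_num : (1:ℝ) < 4)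
    have hj' : N + 1 ≤ (4:ℝ) ^ (j+1) := by
      have h1 : (4:ℝ) ^ j + 1 ≤ 4 ^ (j+1) := by
        have : (1:ℝ) ≤ 4 ^ j := one_le_pow₀ (by norm_num : (1:ℝ) ≤ 4)
        rw [pow_succ]
        nlinarith
      linarith
    have hball_sub : ball (c j) 1 ⊆ {x : EuclideanSpace ℝ (Fin n) | N < ‖x‖} := by
      intro x hx
      have hdx : ‖x - c j‖ < 1 := by
        rw [← dist_eq_norm]
        exact mem_ball.mp hx
      have h1 : ‖c j‖ - ‖x - c j‖ ≤ ‖x‖ := by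
        have := norm_sub_norm_le (c j) x
        have h2 : ‖c j - x‖ = ‖x - c j‖ := norm_sub_rev _ _
        linarith
      have := hcnorm j
      simp only [Set.mem_setOf_eq]
      linarith
    have hssub : ball (c j) 1 ⊆ S := Set.subset_iUnion (fun k => ball (c k) 1) j
    have key : V ≤ ⨆ (y : EuclideanSpace ℝ (Fin n)) (r : ℝ) (_ : 0 < r),
        ENNReal.ofReal (r ^ (-β)) *
          ∫⁻ x in ball y r ∩ {x : EuclideanSpace ℝ (Fin n) | N < ‖x‖},
            (‖f x‖₊ : ℝ≥0∞) ^ p := by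
      refine le_iSup_of_le (c j) (le_iSup_of_le 1 (le_iSup_of_le one_pos ?_))
      rw [hInt]
      have heq : (ball (c j) 1 ∩ {x : EuclideanSpace ℝ (Fin n) | N < ‖x‖}) ∩ S
          = ball (c j) 1 := by
        apply Set.Subset.antisymm
        · exact Set.inter_subset_left.trans Set.inter_subset_left
        · exact Set.subset_inter (Set.subset_inter (subset_refl _) hball_sub) hssub
      rw [heq, hballvol _ 1 zero_le_one]
      simp
    have := key.trans hN
    exact absurd this (not_le.mpr (ENNReal.half_lt_self hV0 hVtop))
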